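/- arXiv:2201.01439 — 4 statements merged into one kernel-verified Lean document; each statement's English description precedes it below -/
import Mathlib

section
/- Let m ≥ 2 and let C be a self-dual Z_m-code of length 2n with generator matrix (I_n | A), where A is an n×n matrix over Z_m with rows r_1,...,r_n. Let x, y ∈ (Z_m)^n satisfy ⟨x,x⟩ = ⟨y,y⟩ = ⟨x,y⟩ = 0. Define A(x,y) as the n×n matrix whose i-th row is r'_i = r_i + ⟨r_i,y⟩x − ⟨r_i,x⟩y. Then the Z_m-code C(A,x,y) of length 2n with generator matrix (I_n | A(x,y)) is a self-dual Z_m-code. -/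
open Finset

/-- Inner product of two vectors over `ZMod m`. -/
def dotP {m : ℕ} {ι : Type} [Fintype ι] (x y : ι → ZMod m) : ZMod m :=
  ∑ i, x i * y i

/-- A `ZMod m`-code (submodule) is self-dual if it equals its dual code. -/
def IsSelfDual {m : ℕ} {ι : Type} [Fintype ι]
    (C : Submodule (ZMod m) (ι → ZMod m)) : Prop :=
  ∀ x, x ∈ C ↔ ∀ y ∈ C, dotP x y = 0

/-- The code of length `2n` with generator matrix `(I | M)`: the span of the
vectors `(e_i, M i)`. -/
def genCode (m : ℕ) {ι : Type} [Fintype ι] [DecidableEq ι] (M : ι → ι → ZMod m) :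
    Submodule (ZMod m) (ι ⊕ ι → ZMod m) :=
  Submodule.span (ZMod m)
    {v | ∃ i : ι, v = Sum.elim (fun j => if j = i then 1 else 0) (M i)}

/-- The map `ρ : ZMod m → ℤ` sending the representative `i ∈ {0,…,m−1}` to `i`
if `i ≤ m/2` and to `i − m` otherwise (for `m = 2k` this is the map of the paper). -/
def rho (m : ℕ) (a : ZMod m) : ℤ :=
  if a.val ≤ m / 2 then (a.val : ℤ) else (a.val : ℤ) - (m : ℤ)

/-- Euclidean weight of a vector over `ZMod m`. -/
def wtE {m : ℕ} {ι : Type} [Fintype ι] (v : ι → ZMod m) : ℤ :=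
  ∑ i, (rho m (v i)) ^ 2

/-- A Type II `ZMod (2k)`-code: self-dual and all Euclidean weights divisible by `4k`. -/
def IsTypeII (k : ℕ) {ι : Type} [Fintype ι]
    (C : Submodule (ZMod (2 * k)) (ι → ZMod (2 * k))) : Prop :=
  IsSelfDual C ∧ ∀ c ∈ C, (4 * (k : ℤ)) ∣ wtE c

/-- Equivalence of `ZMod m`-codes: a permutation of coordinates together with
sign changes. -/
def CodeEquiv {m n : ℕ} (C C' : Submodule (ZMod m) (Fin n → ZMod m)) : Prop :=
  ∃ (σ : Equiv.Perm (Fin n)) (ε : Fin n → ZMod m),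
    (∀ i, ε i = 1 ∨ ε i = -1) ∧
    (C' : Set (Fin n → ZMod m)) =
      (fun c : Fin n → ZMod m => fun i => ε i * c (σ i)) '' (C : Set (Fin n → ZMod m))

/-- The binary part of a `ZMod m`-code. -/
def binaryPart {m n : ℕ} (C : Submodule (ZMod m) (Fin n → ZMod m)) :
    Set (Fin n → ZMod 2) :=
  {b | ∃ c ∈ C, ∀ i, b i = ((rho m (c i) : ℤ) : ZMod 2)}

/-- Hamming weight of a binary vector. -/
def wtH {n : ℕ} (b : Fin n → ZMod 2) : ℕ :=
  (Finset.univ.filter fun i => b i ≠ 0).card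

/-- The `n × n` negacirculant matrix with first row `r`. -/
def negacirc {m n : ℕ} (r : Fin n → ZMod m) : Fin n → Fin n → ZMod m :=
  fun i j =>
    if h : (i : ℕ) ≤ (j : ℕ) then r ⟨(j : ℕ) - (i : ℕ), by have hj := j.isLt; omega⟩
    else -r ⟨n + (j : ℕ) - (i : ℕ), by have hi := i.isLt; have hj := j.isLt; omega⟩

/-- The block matrix `[[A, B], [−Bᵀ, Aᵀ]]`. -/
def fourBlock {m n : ℕ} (A B : Fin n → Fin n → ZMod m) :
    (Fin n ⊕ Fin n) → (Fin n ⊕ Fin n) → ZMod m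
  | Sum.inl i, Sum.inl j => A i j
  | Sum.inl i, Sum.inr j => B i j
  | Sum.inr i, Sum.inl j => -B j i
  | Sum.inr i, Sum.inr j => A j i

/-- The Construction A lattice `A_m(C) = (1/√m)(ρ(C) + m ℤ^n)` as a subset of `ℝ^n`. -/
noncomputable def constrA (m : ℕ) {n : ℕ} (C : Submodule (ZMod m) (Fin n → ZMod m)) :
    Set (Fin n → ℝ) :=
  {x | ∃ c ∈ C, ∃ z : Fin n → ℤ,
    x = fun i => (1 / Real.sqrt m) * ((rho m (c i) : ℝ) + (m : ℝ) * (z i : ℝ))}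

section StmtZeroAux

variable {m n : ℕ}

lemma dotP_add_left (a b c : Fin n → ZMod m) :
    dotP (a + b) c = dotP a c + dotP b c := by
  simp [dotP, add_mul, Finset.sum_add_distrib]

lemma dotP_smul_left (r : ZMod m) (a c : Fin n → ZMod m) :
    dotP (r • a) c = r * dotP a c := by
  simp [dotP, Finset.mul_sum, mul_assoc]

lemma dotP_neg_left (a c : Fin n → ZMod m) : dotP (-a) c = -dotP a c := by
  simp [dotP]

lemma dotP_neg_right (a c : Fin n → ZMod m) : dotP a (-c) = -dotP a c := by
  simp [dotP]

lemma dotP_comm (a b : Fin n → ZMod m) : dotP a b = dotP b a := by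
  simp [dotP, mul_comm]

/-- The transformation `v ↦ v + ⟨v,y⟩x − ⟨v,x⟩y`. -/
def Tmap (x y v : Fin n → ZMod m) : Fin n → ZMod m :=
  fun j => v j + dotP v y * x j - dotP v x * y j

lemma dotP_Tmap (x y v w : Fin n → ZMod m) :
    dotP (Tmap x y v) w = dotP v w + dotP v y * dotP x w - dotP v x * dotP y w := by
  unfold Tmap dotP
  simp only [add_mul, sub_mul, Finset.sum_add_distrib, Finset.sum_sub_distrib,
    mul_assoc, ← Finset.mul_sum]

lemma Tmap_isometry (x y : Fin n → ZMod m)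
    (hxx : dotP x x = 0) (hyy : dotP y y = 0) (hxy : dotP x y = 0)
    (v w : Fin n → ZMod m) :
    dotP (Tmap x y v) (Tmap x y w) = dotP v w := by
  have hyx : dotP y x = 0 := by rw [dotP_comm]; exact hxy
  rw [dotP_Tmap, dotP_comm v (Tmap x y w), dotP_comm x (Tmap x y w),
    dotP_comm y (Tmap x y w), dotP_Tmap, dotP_Tmap, dotP_Tmap,
    hxx, hyy, hxy, hyx, dotP_comm w v, dotP_comm w x, dotP_comm w y,
    dotP_comm y v, dotP_comm x v]
  ring

lemma Tmap_inv (x y : Fin n → ZMod m)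
    (hxx : dotP x x = 0) (hyy : dotP y y = 0) (hxy : dotP x y = 0)
    (v : Fin n → ZMod m) :
    Tmap x y (Tmap (-x) y v) = v := by
  have h1 : dotP (Tmap (-x) y v) y = dotP v y := by
    rw [dotP_Tmap, dotP_neg_left, hxy, hyy]; ring
  have h2 : dotP (Tmap (-x) y v) x = dotP v x := by
    have hyx : dotP y x = 0 := by rw [dotP_comm]; exact hxy
    rw [dotP_Tmap, dotP_neg_left, hxx, hyx]; ring
  funext j
  simp only [Tmap, h1, h2, Pi.neg_apply, dotP_neg_right]
  ring

/-- The transformation extended to the whole space `(Fin n ⊕ Fin n) → ZMod m`,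
acting as identity on the left half and `Tmap x y` on the right half. -/
def PhiL (x y : Fin n → ZMod m) :
    ((Fin n ⊕ Fin n) → ZMod m) →ₗ[ZMod m] ((Fin n ⊕ Fin n) → ZMod m) where
  toFun w := Sum.elim (fun i => w (Sum.inl i)) (Tmap x y (fun i => w (Sum.inr i)))
  map_add' a b := by
    funext s
    cases s with
    | inl i => simp
    | inr j =>
      simp only [Pi.add_apply, Sum.elim_inr, Tmap, dotP]
      simp [add_mul, Finset.sum_add_distrib]
      ring
  map_smul' r a := by
    funext s
    cases s with
    | inl i => simp
    | inr j =>
      simp only [Pi.smul_apply, Sum.elim_inr, Tmap, dotP, smul_eq_mul,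
        RingHom.id_apply]
      rw [show (∑ i, r * a (Sum.inr i) * y i) = r * ∑ i, a (Sum.inr i) * y i by
            rw [Finset.mul_sum]; exact Finset.sum_congr rfl fun i _ => by ring,
          show (∑ i, r * a (Sum.inr i) * x i) = r * ∑ i, a (Sum.inr i) * x i by
            rw [Finset.mul_sum]; exact Finset.sum_congr rfl fun i _ => by ring]
      ring

lemma dotP_sum_split (a b : (Fin n ⊕ Fin n) → ZMod m) :
    dotP a b = dotP (fun i => a (Sum.inl i)) (fun i => b (Sum.inl i)) +
      dotP (fun i => a (Sum.inr i)) (fun i => b (Sum.inr i)) := by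
  simp [dotP, Fintype.sum_sum_type]

lemma PhiL_isometry (x y : Fin n → ZMod m)
    (hxx : dotP x x = 0) (hyy : dotP y y = 0) (hxy : dotP x y = 0)
    (a b : (Fin n ⊕ Fin n) → ZMod m) :
    dotP (PhiL x y a) (PhiL x y b) = dotP a b := by
  rw [dotP_sum_split, dotP_sum_split a b]
  congr 1
  exact Tmap_isometry x y hxx hyy hxy _ _

lemma PhiL_inv (x y : Fin n → ZMod m)
    (hxx : dotP x x = 0) (hyy : dotP y y = 0) (hxy : dotP x y = 0)
    (w : (Fin n ⊕ Fin n) → ZMod m) :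
    PhiL x y (PhiL (-x) y w) = w := by
  funext s
  cases s with
  | inl i => rfl
  | inr j =>
    show Tmap x y (Tmap (-x) y (fun i => w (Sum.inr i))) j = _
    rw [Tmap_inv x y hxx hyy hxy]

lemma PhiL_inv' (x y : Fin n → ZMod m)
    (hxx : dotP x x = 0) (hyy : dotP y y = 0) (hxy : dotP x y = 0)
    (w : (Fin n ⊕ Fin n) → ZMod m) :
    PhiL (-x) y (PhiL x y w) = w := by
  have hxx' : dotP (-x) (-x) = 0 := by
    rw [dotP_neg_left, dotP_comm, dotP_neg_left, dotP_comm x x, hxx]; ring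
  have hxy' : dotP (-x) y = 0 := by rw [dotP_neg_left, hxy]; ring
  have := PhiL_inv (-x) y hxx' hyy hxy' w
  rwa [neg_neg] at this

lemma genCode_map (A : Fin n → Fin n → ZMod m) (x y : Fin n → ZMod m) :
    genCode m (fun i j => A i j + dotP (A i) y * x j - dotP (A i) x * y j) =
      Submodule.map (PhiL x y) (genCode m A) := by
  unfold genCode
  rw [Submodule.map_span]
  congr 1
  ext v
  constructor
  · rintro ⟨i, rfl⟩
    refine ⟨Sum.elim (fun j => if j = i then 1 else 0) (A i), ⟨i, rfl⟩, ?_⟩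
    funext s
    cases s with
    | inl j => rfl
    | inr j => rfl
  · rintro ⟨u, ⟨i, rfl⟩, rfl⟩
    exact ⟨i, rfl⟩

end StmtZeroAux

/-- transforming the right half of a generator matrix of a
self-dual `ZMod m`-code by `r ↦ r + ⟨r,y⟩x − ⟨r,x⟩y` gives a self-dual code. -/
theorem stmt0 (m n : ℕ) (hm : 2 ≤ m) (A : Fin n → Fin n → ZMod m)
    (hC : IsSelfDual (genCode m A))
    (x y : Fin n → ZMod m)
    (hxx : dotP x x = 0) (hyy : dotP y y = 0) (hxy : dotP x y = 0) :
    IsSelfDual (genCode m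
      (fun i j => A i j + dotP (A i) y * x j - dotP (A i) x * y j)) := by
  rw [genCode_map]
  set C := genCode m A with hCdef
  set Φ := PhiL x y
  set Ψ := PhiL (-x) y
  have hmem : ∀ w, w ∈ Submodule.map Φ C ↔ Ψ w ∈ C := by
    intro w
    rw [Submodule.mem_map]
    constructor
    · rintro ⟨u, hu, rfl⟩
      rwa [show Ψ (Φ u) = u from PhiL_inv' x y hxx hyy hxy u]
    · intro h
      exact ⟨Ψ w, h, PhiL_inv x y hxx hyy hxy w⟩
  intro w
  rw [hmem w, hC (Ψ w)]
  constructor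
  · intro h u' hu'
    have h1 : Ψ u' ∈ C := (hmem u').mp hu'
    have h2 : dotP (Ψ w) (Ψ u') = 0 := h _ h1
    calc dotP w u' = dotP (Φ (Ψ w)) (Φ (Ψ u')) := by
          rw [PhiL_inv x y hxx hyy hxy, PhiL_inv x y hxx hyy hxy]
      _ = dotP (Ψ w) (Ψ u') := PhiL_isometry x y hxx hyy hxy _ _
      _ = 0 := h2
  · intro h u hu
    have h1 : Φ u ∈ Submodule.map Φ C := ⟨u, hu, rfl⟩
    have h2 : dotP w (Φ u) = 0 := h _ h1
    calc dotP (Ψ w) u = dotP (Φ (Ψ w)) (Φ u) :=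
          (PhiL_isometry x y hxx hyy hxy _ _).symm
      _ = dotP w (Φ u) := by rw [PhiL_inv x y hxx hyy hxy]
      _ = 0 := h2
end

section
/- Let m ≥ 2, let A be an n×n' matrix over Z_m with rows r_1,...,r_n, and let x, y ∈ (Z_m)^{n'} satisfy ⟨x,x⟩ = ⟨y,y⟩ = ⟨x,y⟩ = 0. Let A(x,y) be the n×n' matrix whose i-th row is r_i + ⟨r_i,y⟩x − ⟨r_i,x⟩y. Then A(x,y)·A(x,y)^T = A·A^T; equivalently, ⟨r'_i, r'_j⟩ = ⟨r_i, r_j⟩ for all i, j, where r'_i denotes the i-th row of A(x,y). -/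
open Finset

/-- the transformation `r ↦ r + ⟨r,y⟩x − ⟨r,x⟩y` preserves all
inner products of the rows of a matrix, i.e. `A(x,y)·A(x,y)ᵀ = A·Aᵀ`. -/
theorem stmt1 (m n n' : ℕ) (hm : 2 ≤ m) (A : Fin n → Fin n' → ZMod m)
    (x y : Fin n' → ZMod m)
    (hxx : dotP x x = 0) (hyy : dotP y y = 0) (hxy : dotP x y = 0) :
    ∀ i j : Fin n,
      dotP (fun t => A i t + dotP (A i) y * x t - dotP (A i) x * y t)
           (fun t => A j t + dotP (A j) y * x t - dotP (A j) x * y t)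
        = dotP (A i) (A j) := by
  intro i j
  unfold dotP at *
  set a := ∑ t, A i t * x t with ha
  set b := ∑ t, A i t * y t with hb
  set c := ∑ t, A j t * x t with hc
  set d := ∑ t, A j t * y t with hd
  have key : ∀ t ∈ Finset.univ, (A i t + b * x t - a * y t) * (A j t + d * x t - c * y t)
      = A i t * A j t + d * (A i t * x t) - c * (A i t * y t) + b * (A j t * x t)
        + b * d * (x t * x t) - b * c * (x t * y t) - a * (A j t * y t)
        - a * d * (x t * y t) + a * c * (y t * y t) := fun t _ => by ring
  rw [Finset.sum_congr rfl key]
  simp only [Finset.sum_add_distrib, Finset.sum_sub_distrib, ← Finset.mul_sum]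
  rw [← ha, ← hb, ← hc, ← hd, hxx, hyy, hxy]
  ring
end

section
/- Let k ≥ 1 and let C be a Type II Z_{2k}-code of length 2n with generator matrix (I_n | A), where A is an n×n matrix over Z_{2k} with rows r_1,...,r_n. Let x, y ∈ (Z_{2k})^n satisfy wt_E(x) ≡ wt_E(y) ≡ 0 (mod 4k) and ⟨x,y⟩ = 0. Define A(x,y) as the n×n matrix whose i-th row is r_i + ⟨r_i,y⟩x − ⟨r_i,x⟩y. Then the Z_{2k}-code C(A,x,y) of length 2n with generator matrix (I_n | A(x,y)) is a Type II Z_{2k}-code. -/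
open Finset

/-! ### Auxiliary lemmas -/

/-- Integer "Euclidean pairing" of two vectors. -/
def Ew {m : ℕ} {ι : Type} [Fintype ι] (u v : ι → ZMod m) : ℤ :=
  ∑ i, rho m (u i) * rho m (v i)

lemma rho_cast {m : ℕ} [NeZero m] (a : ZMod m) : ((rho m a : ℤ) : ZMod m) = a := by
  unfold rho; split <;> push_cast <;> simp [ZMod.natCast_val, ZMod.cast_id]

lemma rho_zero {m : ℕ} [NeZero m] : rho m 0 = 0 := by
  unfold rho; simp

lemma Ew_cast {m : ℕ} {ι : Type} [Fintype ι] [NeZero m] (u v : ι → ZMod m) :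
    ((Ew u v : ℤ) : ZMod m) = dotP u v := by
  unfold Ew dotP; push_cast; simp [rho_cast]

lemma dvd_Ew {m : ℕ} {ι : Type} [Fintype ι] [NeZero m] {u v : ι → ZMod m}
    (h : dotP u v = 0) : (m : ℤ) ∣ Ew u v := by
  rw [← ZMod.intCast_zmod_eq_zero_iff_dvd, Ew_cast]; exact h

lemma wtE_eq_Ew {m : ℕ} {ι : Type} [Fintype ι] (v : ι → ZMod m) : wtE v = Ew v v := by
  unfold wtE Ew; exact Finset.sum_congr rfl fun i _ => sq (rho m (v i))

lemma dotP_comm_s2 {m : ℕ} {ι : Type} [Fintype ι] (u v : ι → ZMod m) :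
    dotP u v = dotP v u := by
  unfold dotP; exact Finset.sum_congr rfl fun i _ => mul_comm _ _

lemma dotP_add_left_s2 {m : ℕ} {ι : Type} [Fintype ι] (u u' v : ι → ZMod m) :
    dotP (u + u') v = dotP u v + dotP u' v := by
  simp [dotP, add_mul, Finset.sum_add_distrib]

lemma dotP_sub_left {m : ℕ} {ι : Type} [Fintype ι] (u u' v : ι → ZMod m) :
    dotP (u - u') v = dotP u v - dotP u' v := by
  simp [dotP, sub_mul, Finset.sum_sub_distrib]

lemma dotP_smul_left_s2 {m : ℕ} {ι : Type} [Fintype ι] (c : ZMod m) (u v : ι → ZMod m) :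
    dotP (c • u) v = c * dotP u v := by
  simp [dotP, Finset.mul_sum, mul_assoc]

lemma dotP_add_right {m : ℕ} {ι : Type} [Fintype ι] (u v v' : ι → ZMod m) :
    dotP u (v + v') = dotP u v + dotP u v' := by
  rw [dotP_comm_s2, dotP_add_left_s2, dotP_comm_s2 v u, dotP_comm_s2 v' u]

lemma dotP_sub_right {m : ℕ} {ι : Type} [Fintype ι] (u v v' : ι → ZMod m) :
    dotP u (v - v') = dotP u v - dotP u v' := by
  rw [dotP_comm_s2, dotP_sub_left, dotP_comm_s2 v u, dotP_comm_s2 v' u]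

lemma dotP_smul_right {m : ℕ} {ι : Type} [Fintype ι] (c : ZMod m) (u v : ι → ZMod m) :
    dotP u (c • v) = c * dotP u v := by
  rw [dotP_comm_s2, dotP_smul_left_s2, dotP_comm_s2]

lemma dotP_zero_left {m : ℕ} {ι : Type} [Fintype ι] (v : ι → ZMod m) :
    dotP (0 : ι → ZMod m) v = 0 := by simp [dotP]

lemma dotP_zero_right {m : ℕ} {ι : Type} [Fintype ι] (v : ι → ZMod m) :
    dotP v (0 : ι → ZMod m) = 0 := by simp [dotP]

lemma span_orth {m : ℕ} {ι : Type} [Fintype ι] {S : Set (ι → ZMod m)}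
    (h : ∀ u ∈ S, ∀ v ∈ S, dotP u v = 0) :
    ∀ u ∈ Submodule.span (ZMod m) S, ∀ v ∈ Submodule.span (ZMod m) S, dotP u v = 0 := by
  have key : ∀ v ∈ Submodule.span (ZMod m) S, ∀ u ∈ S, dotP u v = 0 := by
    intro v hv
    induction hv using Submodule.span_induction with
    | mem w hw => exact fun u hu => h u hu w hw
    | zero => exact fun u hu => dotP_zero_right u
    | add a b ha hb iha ihb =>
      intro u hu; rw [dotP_add_right, iha u hu, ihb u hu, add_zero]
    | smul c a ha iha =>
      intro u hu; rw [dotP_smul_right, iha u hu, mul_zero]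
  intro u hu v hv
  induction hu using Submodule.span_induction with
  | mem w hw => exact key v hv w hw
  | zero => exact dotP_zero_left v
  | add a b ha hb iha ihb => rw [dotP_add_left_s2, iha, ihb, add_zero]
  | smul c a ha iha => rw [dotP_smul_left_s2, iha, mul_zero]

lemma sq_sub_sq' (k : ℕ) {s t : ℤ} (h : (2 * (k : ℤ)) ∣ s - t) :
    (4 * (k : ℤ)) ∣ s ^ 2 - t ^ 2 := by
  obtain ⟨q, hq⟩ := h
  have hs : s = t + 2 * k * q := by linarith
  exact ⟨t * q + k * q ^ 2, by rw [hs]; ring⟩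

lemma two_k_cast (k : ℕ) : ((2 * k : ℕ) : ℤ) = 2 * (k : ℤ) := by push_cast; ring

lemma rho_add (k : ℕ) [NeZero (2 * k)] (a b : ZMod (2 * k)) :
    (2 * (k : ℤ)) ∣ rho (2 * k) (a + b) - (rho (2 * k) a + rho (2 * k) b) := by
  rw [← two_k_cast, ← ZMod.intCast_zmod_eq_zero_iff_dvd]
  push_cast
  simp [rho_cast]

lemma rho_mul (k : ℕ) [NeZero (2 * k)] (c a : ZMod (2 * k)) :
    (2 * (k : ℤ)) ∣ rho (2 * k) (c * a) - rho (2 * k) c * rho (2 * k) a := by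
  rw [← two_k_cast, ← ZMod.intCast_zmod_eq_zero_iff_dvd]
  push_cast
  simp [rho_cast]

lemma wtE_add {ι : Type} [Fintype ι] (k : ℕ) [NeZero (2 * k)] (u v : ι → ZMod (2 * k)) :
    (4 * (k : ℤ)) ∣ wtE (u + v) - (wtE u + wtE v + 2 * Ew u v) := by
  have heq : wtE (u + v) - (wtE u + wtE v + 2 * Ew u v) =
      ∑ i, ((rho (2 * k) ((u + v) i)) ^ 2 -
        (rho (2 * k) (u i) + rho (2 * k) (v i)) ^ 2) := by
    unfold wtE Ew
    rw [Finset.sum_sub_distrib, Finset.mul_sum, ← Finset.sum_add_distrib,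
      ← Finset.sum_add_distrib]
    congr 1
    exact Finset.sum_congr rfl fun i _ => by ring
  rw [heq]
  exact Finset.dvd_sum fun i _ => sq_sub_sq' k (by simpa using rho_add k (u i) (v i))

lemma wtE_smul {ι : Type} [Fintype ι] (k : ℕ) [NeZero (2 * k)] (c : ZMod (2 * k))
    (u : ι → ZMod (2 * k)) :
    (4 * (k : ℤ)) ∣ wtE (c • u) - (rho (2 * k) c) ^ 2 * wtE u := by
  have heq : wtE (c • u) - (rho (2 * k) c) ^ 2 * wtE u =
      ∑ i, ((rho (2 * k) ((c • u) i)) ^ 2 -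
        (rho (2 * k) c * rho (2 * k) (u i)) ^ 2) := by
    unfold wtE
    rw [Finset.sum_sub_distrib, Finset.mul_sum]
    congr 1
    exact Finset.sum_congr rfl fun i _ => by ring
  rw [heq]
  refine Finset.dvd_sum fun i _ => sq_sub_sq' k ?_
  simpa using rho_mul k c (u i)

lemma span_wtE {ι : Type} [Fintype ι] (k : ℕ) [NeZero (2 * k)]
    {S : Set (ι → ZMod (2 * k))}
    (horth : ∀ u ∈ S, ∀ v ∈ S, dotP u v = 0)
    (hwt : ∀ u ∈ S, (4 * (k : ℤ)) ∣ wtE u) :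
    ∀ c ∈ Submodule.span (ZMod (2 * k)) S, (4 * (k : ℤ)) ∣ wtE c := by
  have ho := span_orth horth
  intro c hc
  induction hc using Submodule.span_induction with
  | mem w hw => exact hwt w hw
  | zero => simp [wtE, rho_zero]
  | add u v hu hv ihu ihv =>
    obtain ⟨a, ha⟩ := ihu
    obtain ⟨b, hb⟩ := ihv
    obtain ⟨f, hf⟩ := wtE_add k u v
    have hEd : (2 * (k : ℤ)) ∣ Ew u v := by
      rw [← two_k_cast]; exact dvd_Ew (ho u hu v hv)
    obtain ⟨e, he⟩ := hEd
    exact ⟨f + a + b + e, by linear_combination hf + ha + hb + 2 * he⟩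
  | smul c u hu ihu =>
    obtain ⟨a, ha⟩ := ihu
    obtain ⟨f, hf⟩ := wtE_smul k c u
    exact ⟨f + (rho (2 * k) c) ^ 2 * a,
      by linear_combination hf + (rho (2 * k) c) ^ 2 * ha⟩

/-- the `i`-th generator of `genCode m M` -/
def gen (m : ℕ) {n : ℕ} (M : Fin n → Fin n → ZMod m) (i : Fin n) :
    Fin n ⊕ Fin n → ZMod m :=
  Sum.elim (fun j => if j = i then 1 else 0) (M i)

lemma gen_mem {m n : ℕ} (M : Fin n → Fin n → ZMod m) (i : Fin n) :
    gen m M i ∈ genCode m M :=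
  Submodule.subset_span ⟨i, rfl⟩

lemma dot_split {m n : ℕ} (u₁ u₂ v₁ v₂ : Fin n → ZMod m) :
    dotP (Sum.elim u₁ u₂) (Sum.elim v₁ v₂) = dotP u₁ v₁ + dotP u₂ v₂ := by
  simp [dotP, Fintype.sum_sum_type]

lemma dot_delta {m n : ℕ} (i j : Fin n) :
    dotP (fun l => if l = i then 1 else 0) (fun l => if l = j then (1 : ZMod m) else 0)
      = if i = j then 1 else 0 := by
  unfold dotP
  rw [Finset.sum_eq_single i]
  · simp [eq_comm]
  · intro b _ hb; simp [hb]
  · simp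

lemma dotP_gen {m n : ℕ} (M : Fin n → Fin n → ZMod m) (i j : Fin n) :
    dotP (gen m M i) (gen m M j) = (if i = j then 1 else 0) + dotP (M i) (M j) := by
  unfold gen; rw [dot_split, dot_delta]

lemma wtE_split {m n : ℕ} (u v : Fin n → ZMod m) :
    wtE (Sum.elim u v) = wtE u + wtE v := by
  simp [wtE, Fintype.sum_sum_type]

open Matrix in
lemma transpose_identity {m n : ℕ} (M : Fin n → Fin n → ZMod m)
    (h : ∀ i j, dotP (M i) (M j) = -(if i = j then 1 else 0)) :
    ∀ l j, (∑ i, M i l * M i j) = -(if l = j then 1 else 0) := by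
  intro l j
  let MM : Matrix (Fin n) (Fin n) (ZMod m) := Matrix.of M
  have h1 : MM * MMᵀ = -1 := by
    ext a b
    have := h a b
    simpa [MM, Matrix.mul_apply, Matrix.one_apply, dotP] using this
  have h2 : MM * (-MMᵀ) = 1 := by rw [Matrix.mul_neg, h1, neg_neg]
  have h3 : (-MMᵀ) * MM = 1 := mul_eq_one_comm.mp h2
  have h4 : MMᵀ * MM = -1 := by
    have := congrArg Neg.neg h3
    rwa [← Matrix.neg_mul, neg_neg] at this
  have := congrFun (congrFun h4 l) j
  simpa [MM, Matrix.mul_apply, Matrix.one_apply] using this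

lemma isSelfDual_genCode {m n : ℕ} (M : Fin n → Fin n → ZMod m)
    (h : ∀ i j, dotP (M i) (M j) = -(if i = j then 1 else 0)) :
    IsSelfDual (genCode m M) := by
  have horthS : ∀ u ∈ {v | ∃ i : Fin n, v = Sum.elim (fun j => if j = i then 1 else 0) (M i)},
      ∀ v ∈ {v | ∃ i : Fin n, v = Sum.elim (fun j => if j = i then 1 else 0) (M i)},
      dotP u v = 0 := by
    rintro u ⟨i, rfl⟩ v ⟨j, rfl⟩
    have := dotP_gen M i j
    unfold gen at this
    rw [this, h i j, add_neg_cancel]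
  have hT := transpose_identity M h
  intro v
  constructor
  · intro hv w hw
    exact span_orth horthS v hv w hw
  · intro hv
    have hvi : ∀ i, dotP v (gen m M i) = 0 := fun i => hv _ (gen_mem M i)
    have hval : ∀ i, v (Sum.inl i) = -∑ l, v (Sum.inr l) * M i l := by
      intro i
      have := hvi i
      unfold dotP gen at this
      rw [Fintype.sum_sum_type] at this
      have h1 : (∑ j, v (Sum.inl j) * Sum.elim (fun j => if j = i then (1 : ZMod m) else 0) (M i) (Sum.inl j)) = v (Sum.inl i) := by
        rw [Finset.sum_eq_single i]
        · simp
        · intro b _ hb; simp [hb, hb.symm]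
        · simp
      rw [h1] at this
      simp only [Sum.elim_inr] at this
      linear_combination this
    have hveq : v = ∑ i, (v (Sum.inl i)) • gen m M i := by
      funext s
      rw [Finset.sum_apply]
      cases s with
      | inl j =>
        simp only [Pi.smul_apply, gen, Sum.elim_inl, smul_eq_mul]
        rw [Finset.sum_eq_single j]
        · simp
        · intro b _ hb; simp [hb, hb.symm]
        · simp
      | inr j =>
        simp only [Pi.smul_apply, gen, Sum.elim_inr, smul_eq_mul]
        symm
        calc ∑ i, v (Sum.inl i) * M i j
            = ∑ i, (-∑ l, v (Sum.inr l) * M i l) * M i j :=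
              Finset.sum_congr rfl fun i _ => by rw [hval i]
          _ = -∑ i, ∑ l, v (Sum.inr l) * (M i l * M i j) := by
              rw [← Finset.sum_neg_distrib]
              refine Finset.sum_congr rfl fun i _ => ?_
              rw [neg_mul, Finset.sum_mul]
              congr 1
              exact Finset.sum_congr rfl fun l _ => by ring
          _ = -∑ l, ∑ i, v (Sum.inr l) * (M i l * M i j) := by rw [Finset.sum_comm]
          _ = -∑ l, v (Sum.inr l) * ∑ i, M i l * M i j := by
              congr 1
              exact Finset.sum_congr rfl fun l _ => by rw [Finset.mul_sum]
          _ = -∑ l, v (Sum.inr l) * (-(if l = j then 1 else 0)) := by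
              congr 1
              exact Finset.sum_congr rfl fun l _ => by rw [hT l j]
          _ = v (Sum.inr j) := by
              simp [mul_ite, Finset.sum_ite_eq', mul_neg]
    rw [hveq]
    exact Submodule.sum_mem _ fun i _ =>
      Submodule.smul_mem _ _ (gen_mem M i)

/-- transforming the right half of a generator matrix of a Type II
`ZMod (2k)`-code by `r ↦ r + ⟨r,y⟩x − ⟨r,x⟩y`, with `wt_E(x) ≡ wt_E(y) ≡ 0 (mod 4k)`
and `⟨x,y⟩ = 0`, gives a Type II `ZMod (2k)`-code. -/
theorem stmt2 (k n : ℕ) (hk : 1 ≤ k) (A : Fin n → Fin n → ZMod (2 * k))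
    (hC : IsTypeII k (genCode (2 * k) A))
    (x y : Fin n → ZMod (2 * k))
    (hx : (4 * (k : ℤ)) ∣ wtE x) (hy : (4 * (k : ℤ)) ∣ wtE y)
    (hxy : dotP x y = 0) :
    IsTypeII k (genCode (2 * k)
      (fun i j => A i j + dotP (A i) y * x j - dotP (A i) x * y j)) := by
  haveI : NeZero (2 * k) := ⟨by omega⟩
  obtain ⟨hsd, hwt⟩ := hC
  set B : Fin n → Fin n → ZMod (2 * k) :=
    fun i j => A i j + dotP (A i) y * x j - dotP (A i) x * y j with hBdef
  -- basic orthogonality facts about x and y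
  have hxx : dotP x x = 0 := by
    have hx' : (4 * (k : ℤ)) ∣ Ew x x := wtE_eq_Ew x ▸ hx
    have h2 : (2 * (k : ℤ)) ∣ Ew x x := dvd_trans ⟨2, by ring⟩ hx'
    rw [← Ew_cast x x, ZMod.intCast_zmod_eq_zero_iff_dvd, two_k_cast]
    exact h2
  have hyy : dotP y y = 0 := by
    have hy' : (4 * (k : ℤ)) ∣ Ew y y := wtE_eq_Ew y ▸ hy
    have h2 : (2 * (k : ℤ)) ∣ Ew y y := dvd_trans ⟨2, by ring⟩ hy'
    rw [← Ew_cast y y, ZMod.intCast_zmod_eq_zero_iff_dvd, two_k_cast]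
    exact h2
  have hyx : dotP y x = 0 := by rw [dotP_comm_s2]; exact hxy
  -- facts about the old generator rows
  have hgmem : ∀ i, gen (2 * k) A i ∈ genCode (2 * k) A := gen_mem A
  have hgwt : ∀ i, (4 * (k : ℤ)) ∣ wtE (gen (2 * k) A i) := fun i => hwt _ (hgmem i)
  have hgg : ∀ i j, dotP (gen (2 * k) A i) (gen (2 * k) A j) = 0 :=
    fun i j => (hsd _).1 (hgmem i) _ (hgmem j)
  have hA : ∀ i j, dotP (A i) (A j) = -(if i = j then 1 else 0) := by
    intro i j
    have := hgg i j
    rw [dotP_gen] at this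
    linear_combination this
  -- rows of the new matrix
  have hBrow : ∀ i, B i = A i + dotP (A i) y • x - dotP (A i) x • y := fun i => rfl
  have hBd : ∀ i j, dotP (B i) (B j) = -(if i = j then 1 else 0) := by
    intro i j
    rw [hBrow i, hBrow j]
    simp only [dotP_sub_left, dotP_add_left_s2, dotP_smul_left_s2, dotP_sub_right,
      dotP_add_right, dotP_smul_right]
    rw [dotP_comm_s2 x (A j), dotP_comm_s2 y (A j), hxx, hyy, hxy, hA i j, hyx]
    ring
  constructor
  · exact isSelfDual_genCode B hBd
  · -- weight condition
    intro c hc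
    have horth' : ∀ u ∈ {v | ∃ i : Fin n, v = Sum.elim (fun j => if j = i then 1 else 0) (B i)},
        ∀ v ∈ {v | ∃ i : Fin n, v = Sum.elim (fun j => if j = i then 1 else 0) (B i)},
        dotP u v = 0 := by
      rintro u ⟨i, rfl⟩ v ⟨j, rfl⟩
      have := dotP_gen B i j
      unfold gen at this
      rw [this, hBd i j, add_neg_cancel]
    have hwt' : ∀ u ∈ {v | ∃ i : Fin n, v = Sum.elim (fun j => if j = i then 1 else 0) (B i)},
        (4 * (k : ℤ)) ∣ wtE u := by
      rintro u ⟨i, rfl⟩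
      show (4 * (k : ℤ)) ∣ wtE (gen (2 * k) B i)
      set X : Fin n ⊕ Fin n → ZMod (2 * k) := Sum.elim 0 x with hXdef
      set Y : Fin n ⊕ Fin n → ZMod (2 * k) := Sum.elim 0 y with hYdef
      have hXwt : (4 * (k : ℤ)) ∣ wtE X := by
        rw [hXdef, wtE_split]
        simpa [wtE, rho_zero] using hx
      have hYwt : (4 * (k : ℤ)) ∣ wtE Y := by
        rw [hYdef, wtE_split]
        simpa [wtE, rho_zero] using hy
      have hgenB : gen (2 * k) B i =
          (gen (2 * k) A i + dotP (A i) y • X) + (-(dotP (A i) x)) • Y := by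
        funext s
        cases s with
        | inl j => simp [gen, hXdef, hYdef]
        | inr j =>
          show B i j = _
          simp only [Pi.add_apply, Pi.smul_apply, hXdef, hYdef, Sum.elim_inr,
            smul_eq_mul, gen]
          rw [hBdef]
          ring
      rw [hgenB]
      obtain ⟨q1, e1⟩ := wtE_add k (gen (2 * k) A i) (dotP (A i) y • X)
      obtain ⟨q2, e2⟩ :=
        wtE_add k (gen (2 * k) A i + dotP (A i) y • X) ((-(dotP (A i) x)) • Y)
      obtain ⟨q3, e3⟩ := hgwt i
      have hbX : (4 * (k : ℤ)) ∣ wtE (dotP (A i) y • X) := by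
        have h1 := wtE_smul k (dotP (A i) y) X
        have h2 : (4 * (k : ℤ)) ∣ (rho (2 * k) (dotP (A i) y)) ^ 2 * wtE X :=
          hXwt.mul_left _
        have := dvd_add h1 h2
        simpa using this
      obtain ⟨q4, e4⟩ := hbX
      have haY : (4 * (k : ℤ)) ∣ wtE ((-(dotP (A i) x)) • Y) := by
        have h1 := wtE_smul k (-(dotP (A i) x)) Y
        have h2 : (4 * (k : ℤ)) ∣ (rho (2 * k) (-(dotP (A i) x))) ^ 2 * wtE Y :=
          hYwt.mul_left _
        have := dvd_add h1 h2
        simpa using this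
      obtain ⟨q5, e5⟩ := haY
      have hE : (2 * (k : ℤ)) ∣
          (Ew (gen (2 * k) A i) (dotP (A i) y • X) +
            Ew (gen (2 * k) A i + dotP (A i) y • X) ((-(dotP (A i) x)) • Y)) := by
        rw [← two_k_cast, ← ZMod.intCast_zmod_eq_zero_iff_dvd]
        push_cast
        rw [Ew_cast, Ew_cast]
        have hgX : dotP (gen (2 * k) A i) X = dotP (A i) x := by
          rw [hXdef]
          show dotP (Sum.elim _ (A i)) (Sum.elim 0 x) = _
          rw [dot_split, dotP_zero_right, zero_add]
        have hgY : dotP (gen (2 * k) A i) Y = dotP (A i) y := by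
          rw [hYdef]
          show dotP (Sum.elim _ (A i)) (Sum.elim 0 y) = _
          rw [dot_split, dotP_zero_right, zero_add]
        have hXY : dotP X Y = 0 := by
          rw [hXdef, hYdef, dot_split, dotP_zero_right, zero_add, hxy]
        rw [dotP_smul_right, dotP_smul_right, dotP_add_left_s2, dotP_smul_left_s2,
          hgX, hgY, hXY]
        ring
      obtain ⟨q6, e6⟩ := hE
      exact ⟨q2 + q1 + q3 + q4 + q5 + q6,
        by linear_combination e2 + e1 + e3 + e4 + e5 + 2 * e6⟩
    exact span_wtE k horth' hwt' c hc
end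

section
/- Let k ≥ 1 and let C be a self-dual Z_{2k}-code of length n generated by vectors g_1,...,g_s ∈ (Z_{2k})^n, each of Euclidean weight divisible by 4k. Then every codeword of C has Euclidean weight divisible by 4k; that is, C is a Type II Z_{2k}-code. -/
open Finset

lemma rho_cast_s5 {k : ℕ} (hk : 1 ≤ k) (a : ZMod (2 * k)) :
    ((rho (2 * k) a : ℤ) : ZMod (2 * k)) = a := by
  haveI : NeZero (2 * k) := ⟨by omega⟩
  unfold rho
  split
  · push_cast
    simp [ZMod.natCast_val, ZMod.cast_id]
  · have h0 : ((2 * k : ℕ) : ZMod (2 * k)) = 0 := ZMod.natCast_self _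
    push_cast at h0 ⊢
    simp [ZMod.natCast_val, ZMod.cast_id, h0]

lemma rho_zero_s5 {k : ℕ} (hk : 1 ≤ k) : rho (2 * k) (0 : ZMod (2 * k)) = 0 := by
  haveI : NeZero (2 * k) := ⟨by omega⟩
  simp [rho, ZMod.val_zero]

lemma wtE_zero {k n : ℕ} (hk : 1 ≤ k) : wtE (0 : Fin n → ZMod (2 * k)) = 0 := by
  simp [wtE, rho_zero_s5 hk]

lemma wtE_add_s5 {k n : ℕ} (hk : 1 ≤ k) (x y : Fin n → ZMod (2 * k))
    (h : dotP x y = 0) :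
    (4 * (k : ℤ)) ∣ wtE (x + y) - wtE x - wtE y := by
  haveI : NeZero (2 * k) := ⟨by omega⟩
  have ht : ∀ i : Fin n, ∃ t : ℤ,
      rho (2 * k) ((x + y) i) = rho (2 * k) (x i) + rho (2 * k) (y i) + (2 * k) * t := by
    intro i
    have h2 : ((rho (2 * k) ((x + y) i) - rho (2 * k) (x i) - rho (2 * k) (y i) : ℤ) :
        ZMod (2 * k)) = 0 := by
      push_cast [rho_cast_s5 hk]
      simp [Pi.add_apply]
    obtain ⟨t, ht⟩ := (ZMod.intCast_zmod_eq_zero_iff_dvd _ _).1 h2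
    refine ⟨t, ?_⟩
    push_cast at ht
    linarith
  choose t ht using ht
  have hd : ((2 : ℤ) * k) ∣ ∑ i, rho (2 * k) (x i) * rho (2 * k) (y i) := by
    have hc : ((∑ i, rho (2 * k) (x i) * rho (2 * k) (y i) : ℤ) : ZMod (2 * k)) = 0 := by
      push_cast [rho_cast_s5 hk]
      simpa [dotP] using h
    have := (ZMod.intCast_zmod_eq_zero_iff_dvd _ _).1 hc
    simpa using this
  obtain ⟨u, hu⟩ := hd
  refine ⟨u + ∑ i, (t i * (rho (2 * k) (x i) + rho (2 * k) (y i)) + k * (t i) ^ 2), ?_⟩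
  have heq : wtE (x + y) = wtE x + wtE y
      + 2 * (∑ i, rho (2 * k) (x i) * rho (2 * k) (y i))
      + 4 * k * ∑ i, (t i * (rho (2 * k) (x i) + rho (2 * k) (y i)) + k * (t i) ^ 2) := by
    calc wtE (x + y)
        = ∑ i, (rho (2 * k) (x i) + rho (2 * k) (y i) + (2 * k) * t i) ^ 2 := by
          unfold wtE
          exact Finset.sum_congr rfl fun i _ => by rw [ht i]
      _ = ∑ i, ((rho (2 * k) (x i)) ^ 2 + (rho (2 * k) (y i)) ^ 2
            + 2 * (rho (2 * k) (x i) * rho (2 * k) (y i))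
            + 4 * k * (t i * (rho (2 * k) (x i) + rho (2 * k) (y i)) + k * (t i) ^ 2)) :=
          Finset.sum_congr rfl fun i _ => by ring
      _ = _ := by
          simp only [Finset.sum_add_distrib, ← Finset.mul_sum, wtE]
  rw [heq, hu]
  ring

/-- a self-dual `ZMod (2k)`-code generated by vectors each of
Euclidean weight divisible by `4k` is Type II. -/
theorem stmt5 (k n s : ℕ) (hk : 1 ≤ k)
    (g : Fin s → (Fin n → ZMod (2 * k)))
    (C : Submodule (ZMod (2 * k)) (Fin n → ZMod (2 * k)))
    (hgen : C = Submodule.span (ZMod (2 * k)) (Set.range g))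
    (hSD : IsSelfDual C)
    (hg : ∀ i, (4 * (k : ℤ)) ∣ wtE (g i)) :
    ∀ c ∈ C, (4 * (k : ℤ)) ∣ wtE c := by
  have horth : ∀ x ∈ C, ∀ y ∈ C, dotP x y = 0 := by
    intro x hx y hy
    exact (hSD x).1 hx y hy
  intro c hc
  rw [hgen] at hc
  induction hc using Submodule.span_induction with
  | mem v hv =>
    obtain ⟨i, rfl⟩ := hv
    exact hg i
  | zero => simp [wtE_zero hk]
  | add x y hx hy ihx ihy =>
    have hxC : x ∈ C := by rw [hgen]; exact hx
    have hyC : y ∈ C := by rw [hgen]; exact hy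
    have h0 := horth x hxC y hyC
    have hadd := wtE_add_s5 hk x y h0
    have hre : wtE (x + y) = wtE x + wtE y + (wtE (x + y) - wtE x - wtE y) := by ring
    rw [hre]
    exact dvd_add (dvd_add ihx ihy) hadd
  | smul r x hx ihx =>
    have hxC : x ∈ C := by rw [hgen]; exact hx
    have key : ∀ t : ℕ, (4 * (k : ℤ)) ∣ wtE (((t : ZMod (2 * k)) : ZMod (2 * k)) • x) := by
      intro t
      induction t with
      | zero => simp [wtE_zero hk]
      | succ t iht =>
        have hmem : ((t : ZMod (2 * k)) • x) ∈ C := C.smul_mem _ hxC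
        have h0 := horth _ hmem x hxC
        have hadd := wtE_add_s5 hk ((t : ZMod (2 * k)) • x) x h0
        have hrw : (((t + 1 : ℕ) : ZMod (2 * k)) : ZMod (2 * k)) • x
            = (t : ZMod (2 * k)) • x + x := by
          push_cast
          rw [add_smul, one_smul]
        rw [hrw]
        have hre : wtE ((t : ZMod (2 * k)) • x + x)
            = wtE ((t : ZMod (2 * k)) • x) + wtE x
              + (wtE ((t : ZMod (2 * k)) • x + x) - wtE ((t : ZMod (2 * k)) • x) - wtE x) := by
          ring
        rw [hre]
        exact dvd_add (dvd_add iht ihx) hadd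
    have hr : r = ((r.val : ℕ) : ZMod (2 * k)) := by
      haveI : NeZero (2 * k) := ⟨by omega⟩
      simp [ZMod.natCast_val, ZMod.cast_id]
    rw [hr]
    exact key r.val
end
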